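/- arXiv:1106.3059 — 3 statements merged into one kernel-verified Lean document; each statement's English description precedes it below -/
import Mathlib

section
/- (Kraft inequality / algorithmic probability is at most 1) If S is a prefix-free set of boolean strings, then ∑'_{p ∈ S} (1/2)^{p.length} ≤ 1. Consequently, for any partial computable F : List Bool →. ℕ whose domain is prefix-free, the algorithmic probability satisfies m_F(s) ≤ 1 for every s : ℕ. -/
/-- A set of boolean strings is prefix-free if no element is a proper prefix
of another element. -/
def PrefixFree (S : Set (List Bool)) : Prop :=
  ∀ p ∈ S, ∀ q ∈ S, p <+: q → p = q

/-- The algorithmic probability of `s` under the machine `F`: the sum of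
`(1/2)^{p.length}` over all programs `p` with `F p = Part.some s`. -/
noncomputable def algProb (F : List Bool →. ℕ) (s : ℕ) : ℝ :=
  ∑' p : {p : List Bool // F p = Part.some s}, ((1 : ℝ) / 2) ^ (p : List Bool).length

/-- All boolean lists of length `m`, as a Finset. -/
def boolLists (m : ℕ) : Finset (List Bool) :=
  Finset.univ.image (fun f : Fin m → Bool => List.ofFn f)

lemma mem_boolLists {m : ℕ} {l : List Bool} : l ∈ boolLists m ↔ l.length = m := by
  simp only [boolLists, Finset.mem_image, Finset.mem_univ, true_and]
  constructor
  · rintro ⟨f, rfl⟩; simp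
  · rintro rfl; exact ⟨l.get, List.ofFn_get l⟩

lemma card_boolLists (m : ℕ) : (boolLists m).card = 2 ^ m := by
  rw [boolLists, Finset.card_image_of_injective _ List.ofFn_injective]
  simp

/-- Length-`n` extensions of `p`. -/
def ext (n : ℕ) (p : List Bool) : Finset (List Bool) :=
  (boolLists (n - p.length)).image (p ++ ·)

lemma card_ext (n : ℕ) (p : List Bool) : (ext n p).card = 2 ^ (n - p.length) := by
  rw [ext, Finset.card_image_of_injective _ (fun a b h => List.append_cancel_left h),
    card_boolLists]

lemma mem_ext {n : ℕ} {p l : List Bool} (h : l ∈ ext n p) :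
    p <+: l ∧ l.length = p.length + (n - p.length) := by
  simp only [ext, Finset.mem_image] at h
  obtain ⟨q, hq, rfl⟩ := h
  rw [mem_boolLists] at hq
  exact ⟨⟨q, rfl⟩, by simp [hq]⟩

lemma kraft_finset (T : Finset (List Bool))
    (hpf : ∀ p ∈ T, ∀ q ∈ T, p <+: q → p = q) :
    ∑ p ∈ T, ((1 : ℝ) / 2) ^ p.length ≤ 1 := by
  set n := T.sup List.length with hn
  have hlen : ∀ p ∈ T, p.length ≤ n := fun p hp => Finset.le_sup hp
  -- disjointness
  have hdisj : ∀ p ∈ T, ∀ q ∈ T, p ≠ q → Disjoint (ext n p) (ext n q) := by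
    intro p hp q hq hne
    rw [Finset.disjoint_left]
    intro l hlp hlq
    obtain ⟨hple, _⟩ := mem_ext hlp
    obtain ⟨hqle, _⟩ := mem_ext hlq
    rcases List.prefix_or_prefix_of_prefix hple hqle with h | h
    · exact hne (hpf p hp q hq h)
    · exact hne (hpf q hq p hp h).symm
  -- union bound
  have hsub : T.biUnion (ext n) ⊆ boolLists n := by
    intro l hl
    obtain ⟨p, hp, hlp⟩ := Finset.mem_biUnion.mp hl
    obtain ⟨_, hlen'⟩ := mem_ext hlp
    rw [mem_boolLists, hlen', Nat.add_sub_cancel' (hlen p hp)]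
  have hnat : ∑ p ∈ T, 2 ^ (n - p.length) ≤ 2 ^ n := by
    calc ∑ p ∈ T, 2 ^ (n - p.length) = ∑ p ∈ T, (ext n p).card := by
          simp [card_ext]
      _ = (T.biUnion (ext n)).card := (Finset.card_biUnion hdisj).symm
      _ ≤ (boolLists n).card := Finset.card_le_card hsub
      _ = 2 ^ n := card_boolLists n
  have hreal : ∑ p ∈ T, ((1 : ℝ) / 2) ^ p.length
      = (∑ p ∈ T, (2 : ℝ) ^ (n - p.length)) / 2 ^ n := by
    rw [Finset.sum_div]
    refine Finset.sum_congr rfl fun p hp => ?_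
    rw [div_pow, one_pow, div_eq_div_iff (by positivity) (by positivity), one_mul,
      ← pow_add, Nat.sub_add_cancel (hlen p hp)]
  rw [hreal, div_le_one (by positivity)]
  calc (∑ p ∈ T, (2 : ℝ) ^ (n - p.length)) = ((∑ p ∈ T, 2 ^ (n - p.length) : ℕ) : ℝ) := by
        push_cast; ring
    _ ≤ ((2 ^ n : ℕ) : ℝ) := by exact_mod_cast hnat
    _ = 2 ^ n := by push_cast; ring

lemma kraft_set (S : Set (List Bool)) (h : PrefixFree S) :
    (∑' p : S, ((1 : ℝ) / 2) ^ (p : List Bool).length) ≤ 1 := by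
  by_cases hs : Summable (fun p : S => ((1 : ℝ) / 2) ^ (p : List Bool).length)
  · refine Summable.tsum_le_of_sum_le hs fun F => ?_
    have himg : ∑ q ∈ F.image Subtype.val, ((1 : ℝ) / 2) ^ q.length
        = ∑ p ∈ F, ((1 : ℝ) / 2) ^ (p : List Bool).length :=
      Finset.sum_image (fun a _ b _ hab => Subtype.val_injective hab)
    rw [← himg]
    refine kraft_finset _ fun p hp q hq hpq => ?_
    simp only [Finset.mem_image] at hp hq
    obtain ⟨⟨p', hp'⟩, _, rfl⟩ := hp
    obtain ⟨⟨q', hq'⟩, _, rfl⟩ := hq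
    exact h _ hp' _ hq' hpq
  · rw [tsum_eq_zero_of_not_summable hs]; norm_num

/-- Kraft inequality: a prefix-free set of boolean strings satisfies
`∑ (1/2)^{length} ≤ 1`; consequently the algorithmic probability of any
machine with prefix-free domain is at most `1`. -/
theorem kraft_inequality :
    (∀ S : Set (List Bool), PrefixFree S →
      (∑' p : S, ((1 : ℝ) / 2) ^ (p : List Bool).length) ≤ 1) ∧
    (∀ F : List Bool →. ℕ, Partrec F → PrefixFree {p : List Bool | (F p).Dom} →
      ∀ s : ℕ, algProb F s ≤ 1) := by
  constructor
  · exact kraft_set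
  · intro F _ hdom s
    have h' : PrefixFree {p : List Bool | F p = Part.some s} := by
      intro p hp q hq hpq
      refine hdom p ?_ q ?_ hpq
      · show (F p).Dom; rw [hp]; trivial
      · show (F q).Dom; rw [hq]; trivial
    exact kraft_set {p : List Bool | F p = Part.some s} h'
end

section
/- (Champernowne) The base-10 Champernowne sequence is normal in base 10: for every nonempty list w of elements of Fin 10, the number of indices i < N at which the block of consecutive terms d(i), d(i+1), …, d(i + w.length − 1) equals w, divided by N, tends to (1/10)^{w.length} as N → ∞. In particular, there exists a computable sequence generated by a simple rule that is normal. -/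
/-- The concatenation of the base-10 digit strings (most significant digit
first) of the integers `1, 2, …, n`. -/
def champPrefix (n : ℕ) : List (Fin 10) :=
  (List.range n).flatMap (fun k => ((Nat.digits 10 (k + 1)).reverse).map (fun d => Fin.ofNat 10 d))

/-- The base-10 Champernowne sequence `0.123456789101112…`, as a function
`ℕ → Fin 10`.  Each of the first `i+1` integers contributes at least one digit,
so the prefix `champPrefix (i+1)` already contains position `i`. -/
def champernowne (i : ℕ) : Fin 10 :=
  (champPrefix (i + 1)).getD i 0

/-- `d` is normal in base `b`: every nonempty block `w` occurs with limiting
frequency `(1/b)^{w.length}`. -/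
def IsNormal (b : ℕ) (d : ℕ → Fin b) : Prop :=
  ∀ w : List (Fin b), w ≠ [] →
    Filter.Tendsto
      (fun N : ℕ =>
        (((Finset.range N).filter
          (fun i => List.ofFn (fun j : Fin w.length => d (i + (j : ℕ))) = w)).card : ℝ) / N)
      Filter.atTop (nhds (((1 : ℝ) / b) ^ w.length))

open Nat List Finset Filter
open Fin.NatCast

def sstr (m : ℕ) : List (Fin 10) := ((Nat.digits 10 m).reverse).map (Nat.cast : ℕ → Fin 10)

def occIn (w L : List (Fin 10)) : ℕ :=
  ((Finset.range L.length).filter (fun p => w <+: L.drop p)).card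

def LL (n : ℕ) : ℕ := (champPrefix n).length

def nn (N : ℕ) : ℕ := Nat.findGreatest (fun n => LL n ≤ N) N

lemma champPrefix_eq (n : ℕ) : champPrefix n = (List.range n).flatMap (fun k => sstr (k + 1)) := by
  unfold champPrefix sstr
  congr 1

/-- digits of `m / b^j` are the digits of `m` with the low `j` dropped. -/
lemma digits_div_pow' (m j : ℕ) : Nat.digits 10 (m / 10 ^ j) = (Nat.digits 10 m).drop j := by
  induction j with
  | zero => simp
  | succ j ih =>
    have h1 : m / 10 ^ (j + 1) = (m / 10 ^ j) / 10 := by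
      rw [Nat.div_div_eq_div_mul, pow_succ]
    rw [h1, ← List.drop_drop, ← ih]
    rcases Nat.eq_zero_or_pos (m / 10 ^ j) with h | h
    · simp [h]
    · rw [Nat.digits_def' (by norm_num : (1:ℕ) < 10) h]
      simp

/-- injectivity of ofDigits on fixed-length digit lists -/
lemma ofDigits_inj (b : ℕ) (hb : 1 < b) : ∀ (X Y : List ℕ), (∀ x ∈ X, x < b) → (∀ y ∈ Y, y < b) →
    X.length = Y.length → Nat.ofDigits b X = Nat.ofDigits b Y → X = Y := by
  intro X
  induction X with
  | nil => intro Y _ _ h _; exact (List.length_eq_zero_iff.mp h.symm).symm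
  | cons x X ih =>
    intro Y hX hY hlen hval
    cases Y with
    | nil => simp at hlen
    | cons y Y =>
      simp only [Nat.ofDigits_cons] at hval
      have hx : x < b := hX x (by simp)
      have hy : y < b := hY y (by simp)
      have hxy : x = y := by
        have := congrArg (· % b) hval
        simpa [Nat.add_mul_mod_self_left, Nat.mod_eq_of_lt hx, Nat.mod_eq_of_lt hy] using this
      have hXY : Nat.ofDigits b X = Nat.ofDigits b Y := by
        have := congrArg (· / b) hval
        rw [hxy] at this
        have h1 : (y + b * Nat.ofDigits b X) / b = Nat.ofDigits b X + y / b := by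
          rw [Nat.add_mul_div_left _ _ (by omega), add_comm]
        have h2 : (y + b * Nat.ofDigits b Y) / b = Nat.ofDigits b Y + y / b := by
          rw [Nat.add_mul_div_left _ _ (by omega), add_comm]
        rw [h1, h2] at this
        omega
      rw [hxy, ih Y (fun z hz => hX z (by simp [hz])) (fun z hz => hY z (by simp [hz]))
        (by simpa using hlen) hXY]

/-- core digit-block characterization -/
lemma take_digits_eq_iff {k c : ℕ} (wv : List ℕ) (hwv : ∀ x ∈ wv, x < 10)
    (hk : wv.length = k) (hk1 : 0 < k) (hc : Nat.ofDigits 10 wv = c) (q : ℕ) :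
    (Nat.digits 10 q).take k = wv ↔ (q % 10 ^ k = c ∧ 10 ^ (k - 1) ≤ q) := by
  have hc10 : c < 10 ^ k := by
    rw [← hc, ← hk]; exact Nat.ofDigits_lt_base_pow_length (by norm_num) hwv
  have hdlt : ∀ x ∈ Nat.digits 10 q, x < 10 := fun x hx => Nat.digits_lt_base (by norm_num) hx
  constructor
  · intro h
    have hlen : k ≤ (Nat.digits 10 q).length := by
      have := congrArg List.length h
      simp [hk] at this
      omega
    have hq0 : q ≠ 0 := by
      intro h0; rw [h0] at hlen; simp at hlen; omega
    have hsplit : Nat.digits 10 q = wv ++ (Nat.digits 10 q).drop k := by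
      rw [← h, List.take_append_drop]
    have hmod : q % 10 ^ k = c := by
      conv_lhs => rw [← Nat.ofDigits_digits 10 q, hsplit]
      rw [Nat.ofDigits_append, hk, hc]
      simp [Nat.add_mul_mod_self_left, Nat.mod_eq_of_lt hc10]
    have hge : 10 ^ (k - 1) ≤ q := by
      calc 10 ^ (k-1) ≤ 10 ^ (Nat.log 10 q) := by
            apply Nat.pow_le_pow_right (by norm_num)
            have := Nat.digits_len 10 q (by norm_num) hq0
            omega
        _ ≤ q := Nat.pow_log_le_self 10 hq0
    exact ⟨hmod, hge⟩
  · rintro ⟨hmod, hge⟩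
    have hq0 : q ≠ 0 := by
      have : 0 < 10 ^ (k-1) := Nat.pow_pos (by norm_num)
      omega
    have hlen : k ≤ (Nat.digits 10 q).length := by
      rw [Nat.digits_len 10 q (by norm_num) hq0]
      have : k - 1 ≤ Nat.log 10 q := (Nat.le_log_iff_pow_le (by norm_num) hq0).mpr hge
      omega
    apply ofDigits_inj 10 (by norm_num)
    · intro x hx; exact hdlt x ((List.take_sublist _ _).mem hx)
    · exact hwv
    · simp [hk]; omega
    · have hsplit : Nat.digits 10 q = (Nat.digits 10 q).take k ++ (Nat.digits 10 q).drop k :=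
        (List.take_append_drop _ _).symm
      have h1 : Nat.ofDigits 10 ((Nat.digits 10 q).take k) < 10 ^ k := by
        have := Nat.ofDigits_lt_base_pow_length (b := 10) (l := (Nat.digits 10 q).take k)
          (by norm_num) (fun x hx => hdlt x ((List.take_sublist _ _).mem hx))
        calc Nat.ofDigits 10 ((Nat.digits 10 q).take k) < 10 ^ ((Nat.digits 10 q).take k).length := this
          _ ≤ 10 ^ k := Nat.pow_le_pow_right (by norm_num) (by simp)
      have h2 : q = Nat.ofDigits 10 ((Nat.digits 10 q).take k) +
          10 ^ k * Nat.ofDigits 10 ((Nat.digits 10 q).drop k) := by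
        conv_lhs => rw [← Nat.ofDigits_digits 10 q, hsplit]
        rw [Nat.ofDigits_append]
        congr 2
        simp [hk]
        omega
      rw [hc]
      rw [h2] at hmod
      rw [Nat.add_mul_mod_self_left, Nat.mod_eq_of_lt h1] at hmod
      exact hmod

/-- take-drop-reverse identity -/
lemma take_drop_reverse {α : Type*} (D : List α) (p k j : ℕ) (h : p + k + j = D.length) :
    (D.reverse.drop p).take k = ((D.drop j).take k).reverse := by
  apply List.ext_getElem
  · simp; omega
  · intro t h1 h2
    simp only [List.getElem_take, List.getElem_drop, List.getElem_reverse]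
    simp only [List.length_take, List.length_drop, List.length_reverse] at h1 h2 ⊢
    congr 1
    omega

lemma roundtrip1 (X : List ℕ) (hX : ∀ x ∈ X, x < 10) :
    (X.map (Nat.cast : ℕ → Fin 10)).map Fin.val = X := by
  induction X with
  | nil => rfl
  | cons x X ih =>
    have hx : x < 10 := hX x (by simp)
    have ih' := ih (fun y hy => hX y (by simp [hy]))
    simp only [List.map_cons, ih', List.cons.injEq, and_true]
    simp [Fin.val_natCast, Nat.mod_eq_of_lt hx]

lemma roundtrip2 (Y : List (Fin 10)) : (Y.map Fin.val).map (Nat.cast : ℕ → Fin 10) = Y := by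
  induction Y with
  | nil => rfl
  | cons y Y ih =>
    simp only [List.map_cons, ih, List.cons.injEq, and_true]
    exact Fin.cast_val_eq_self y

section W
variable (w : List (Fin 10))

def wval : List ℕ := w.reverse.map Fin.val
def wnum : ℕ := Nat.ofDigits 10 (wval w)

lemma wval_length : (wval w).length = w.length := by simp [wval]
lemma wval_lt : ∀ x ∈ wval w, x < 10 := by
  intro x hx
  simp only [wval, List.mem_map, List.mem_reverse] at hx
  obtain ⟨a, _, rfl⟩ := hx
  exact a.isLt

lemma match_iff (hw : w ≠ []) (m p : ℕ) (hm : 1 ≤ m)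
    (hpk : p + w.length ≤ (Nat.digits 10 m).length) :
    (w <+: (sstr m).drop p) ↔
      (m / 10 ^ ((Nat.digits 10 m).length - w.length - p) % 10 ^ w.length = wnum w ∧
       10 ^ (w.length - 1) ≤ m / 10 ^ ((Nat.digits 10 m).length - w.length - p)) := by
  set k := w.length with hkdef
  set D := Nat.digits 10 m with hD
  set j := D.length - k - p with hj
  have hk1 : 0 < k := by simp [hkdef, List.length_pos_iff, hw]
  have hpkj : p + k + j = D.length := by omega
  have hsstr : sstr m = (D.map (Nat.cast : ℕ → Fin 10)).reverse := by
    unfold sstr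
    rw [List.map_reverse]
  have hstep : ((sstr m).drop p).take k
      = (((D.drop j).take k).map (Nat.cast : ℕ → Fin 10)).reverse := by
    rw [hsstr, take_drop_reverse _ p k j (by rw [List.length_map]; exact hpkj),
      ← List.map_drop, ← List.map_take]
  have hDlt : ∀ x ∈ (D.drop j).take k, x < 10 := fun x hx =>
    Nat.digits_lt_base (by norm_num) (((List.take_sublist _ _).trans (List.drop_sublist _ _)).mem hx)
  have key : (w = ((sstr m).drop p).take k) ↔ ((D.drop j).take k = wval w) := by
    rw [hstep]
    constructor
    · intro h
      have h2 : w.reverse = ((D.drop j).take k).map (Nat.cast : ℕ → Fin 10) := by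
        rw [h]; simp
      have h3 := congrArg (List.map Fin.val) h2
      rw [roundtrip1 _ hDlt] at h3
      rw [← h3]; rfl
    · intro h
      rw [h]
      show w = ((w.reverse.map Fin.val).map (Nat.cast : ℕ → Fin 10)).reverse
      rw [roundtrip2, List.reverse_reverse]
  rw [List.prefix_iff_eq_take, ← hkdef, key, ← digits_div_pow']
  exact take_digits_eq_iff (wval w) (wval_lt w) (wval_length w) hk1 rfl _

/-- the per-number occurrence count, as a count over low-cut positions `j`. -/
lemma occIn_sstr (hw : w ≠ []) (m R : ℕ) (hm : 1 ≤ m) (hR : (Nat.digits 10 m).length ≤ R) :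
    occIn w (sstr m) =
      ((Finset.range R).filter (fun j =>
        m / 10 ^ j % 10 ^ w.length = wnum w ∧ 10 ^ (w.length - 1) ≤ m / 10 ^ j)).card := by
  classical
  set k := w.length with hkdef
  set D := Nat.digits 10 m with hD
  set ℓ := D.length with hℓ
  have hk1 : 0 < k := by simp [hkdef, List.length_pos_iff, hw]
  have hm0 : m ≠ 0 := by omega
  have hlen : (sstr m).length = ℓ := by
    rw [sstr]; simp only [List.length_map, List.length_reverse]; rfl
  have hℓlog : ℓ = Nat.log 10 m + 1 := Nat.digits_len 10 m (by norm_num) hm0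
  unfold occIn
  apply Finset.card_bij' (fun p _ => ℓ - k - p) (fun j _ => ℓ - k - j)
  · intro p hp
    simp only [Finset.mem_filter, Finset.mem_range, hlen] at hp
    obtain ⟨hpℓ, hmatch⟩ := hp
    have hpk : p + k ≤ ℓ := by
      have h1 := hmatch.length_le
      simp [hlen, ← hkdef] at h1
      omega
    rw [match_iff w hw m p hm hpk] at hmatch
    simp only [Finset.mem_filter, Finset.mem_range]
    exact ⟨by omega, hmatch⟩
  · intro j hj
    simp only [Finset.mem_filter, Finset.mem_range] at hj
    obtain ⟨hjR, hmod, hge⟩ := hj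
    have hjk : j + k ≤ ℓ := by
      have h1 : 10 ^ (j + (k - 1)) ≤ m := by
        calc 10 ^ (j + (k-1)) = 10 ^ j * 10 ^ (k-1) := by rw [pow_add]
          _ ≤ 10 ^ j * (m / 10 ^ j) := Nat.mul_le_mul_left _ hge
          _ ≤ m := Nat.mul_div_le m (10 ^ j)
      have h2 : j + (k - 1) ≤ Nat.log 10 m := (Nat.le_log_iff_pow_le (by norm_num) hm0).mpr h1
      omega
    have hnℓ : (Nat.digits 10 m).length = ℓ := rfl
    simp only [Finset.mem_filter, Finset.mem_range, hlen]
    constructor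
    · omega
    · rw [match_iff w hw m (ℓ - k - j) hm (by omega)]
      have : ℓ - k - (ℓ - k - j) = j := by omega
      rw [this]
      exact ⟨hmod, hge⟩
  · intro p hp
    simp only [Finset.mem_filter, Finset.mem_range, hlen] at hp
    have hpk : p + k ≤ ℓ := by
      have h1 := hp.2.length_le
      simp [hlen, ← hkdef] at h1
      omega
    omega
  · intro j hj
    simp only [Finset.mem_filter, Finset.mem_range] at hj
    obtain ⟨hjR, hmod, hge⟩ := hj
    have h1 : 10 ^ (j + (k - 1)) ≤ m := by
      calc 10 ^ (j + (k-1)) = 10 ^ j * 10 ^ (k-1) := by rw [pow_add]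
        _ ≤ 10 ^ j * (m / 10 ^ j) := Nat.mul_le_mul_left _ hge
        _ ≤ m := Nat.mul_div_le m (10 ^ j)
    have h2 : j + (k - 1) ≤ Nat.log 10 m := (Nat.le_log_iff_pow_le (by norm_num) hm0).mpr h1
    omega
end W

lemma champPrefix_succ (n : ℕ) : champPrefix (n + 1) = champPrefix n ++ sstr (n + 1) := by
  rw [champPrefix_eq, champPrefix_eq, List.range_succ, List.flatMap_append]
  simp

lemma sstr_length (m : ℕ) (hm : 1 ≤ m) : (sstr m).length = Nat.log 10 m + 1 := by
  rw [sstr]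
  simp only [List.length_map, List.length_reverse]
  exact Nat.digits_len 10 m (by norm_num) (by omega)

lemma LL_zero : LL 0 = 0 := by simp [LL, champPrefix]

lemma LL_succ (n : ℕ) : LL (n + 1) = LL n + (Nat.log 10 (n + 1) + 1) := by
  rw [LL, LL, champPrefix_succ, List.length_append, sstr_length _ (by omega)]

lemma LL_le_succ (n : ℕ) : LL n ≤ LL (n+1) := by rw [LL_succ]; omega

lemma LL_mono : Monotone LL := monotone_nat_of_le_succ LL_le_succ

lemma le_LL (n : ℕ) : n ≤ LL n := by
  induction n with
  | zero => simp [LL_zero]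
  | succ n ih => rw [LL_succ]; omega

lemma champPrefix_prefix {n n' : ℕ} (h : n ≤ n') : champPrefix n <+: champPrefix n' := by
  induction n' with
  | zero => rw [Nat.le_zero.mp h]
  | succ n' ih =>
    rcases Nat.lt_or_ge n (n' + 1) with h' | h'
    · have := ih (by omega)
      rw [champPrefix_succ]
      exact this.trans (List.prefix_append _ _)
    · have : n = n' + 1 := by omega
      rw [this]

lemma champernowne_eq {i n : ℕ} (h : i < LL n) :
    champernowne i = (champPrefix n)[i]'h := by
  rw [champernowne]
  rcases le_or_gt n (i + 1) with h' | h'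
  · have hpre := champPrefix_prefix h'
    rw [List.getD_eq_getElem _ _ (by
      exact lt_of_lt_of_le h hpre.length_le)]
    exact (hpre.getElem h).symm
  · have hpre := champPrefix_prefix (le_of_lt h')
    have hi : i < LL (i + 1) := lt_of_lt_of_le (by omega) (le_LL (i+1))
    rw [List.getD_eq_getElem _ _ hi]
    exact hpre.getElem hi

section W
variable (w : List (Fin 10))

def cnt (N : ℕ) : ℕ :=
  ((Finset.range N).filter
    (fun i => List.ofFn (fun j : Fin w.length => champernowne (i + (j : ℕ))) = w)).card

lemma ofFn_eq_take {i n : ℕ} (h : i + w.length ≤ LL n) :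
    List.ofFn (fun j : Fin w.length => champernowne (i + (j : ℕ)))
      = ((champPrefix n).drop i).take w.length := by
  apply List.ext_getElem
  · simp only [List.length_ofFn, List.length_take, List.length_drop]
    have : LL n = (champPrefix n).length := rfl
    omega
  · intro t h1 h2
    simp only [List.getElem_ofFn]
    rw [List.getElem_take, List.getElem_drop]
    exact champernowne_eq (by
      simp only [List.length_take, List.length_drop] at h2
      have : LL n = (champPrefix n).length := rfl
      omega)

lemma pred_iff_match {i n : ℕ} (h : i + w.length ≤ LL n) :
    (List.ofFn (fun j : Fin w.length => champernowne (i + (j : ℕ))) = w)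
      ↔ (w <+: (champPrefix n).drop i) := by
  rw [ofFn_eq_take w h, List.prefix_iff_eq_take, eq_comm]

lemma occIn_le_cnt (n : ℕ) : occIn w (champPrefix n) ≤ cnt w (LL n) := by
  apply Finset.card_le_card
  intro p hp
  simp only [occIn, Finset.mem_filter, Finset.mem_range] at hp ⊢
  obtain ⟨h1, h2⟩ := hp
  have hpk : p + w.length ≤ LL n := by
    have := h2.length_le
    simp only [List.length_drop] at this
    have hLL : LL n = (champPrefix n).length := rfl
    omega
  exact ⟨h1, (pred_iff_match w hpk).mpr h2⟩

lemma cnt_le_occIn (n : ℕ) : cnt w (LL n) ≤ occIn w (champPrefix n) + w.length := by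
  classical
  have hsub : (Finset.range (LL n)).filter
      (fun i => List.ofFn (fun j : Fin w.length => champernowne (i + (j : ℕ))) = w)
      ⊆ ((Finset.range (LL n)).filter (fun p => w <+: (champPrefix n).drop p))
        ∪ Finset.Ico (LL n + 1 - w.length) (LL n) := by
    intro i hi
    simp only [Finset.mem_filter, Finset.mem_range] at hi
    obtain ⟨h1, h2⟩ := hi
    rcases le_or_gt (i + w.length) (LL n) with h3 | h3
    · apply Finset.mem_union_left
      simp only [Finset.mem_filter, Finset.mem_range]
      exact ⟨h1, (pred_iff_match w h3).mp h2⟩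
    · apply Finset.mem_union_right
      simp only [Finset.mem_Ico]
      omega
  calc cnt w (LL n) ≤ _ := Finset.card_le_card hsub
    _ ≤ _ + (Finset.Ico (LL n + 1 - w.length) (LL n)).card := Finset.card_union_le _ _
    _ ≤ occIn w (champPrefix n) + w.length := by
      rw [Nat.card_Ico]
      have : occIn w (champPrefix n)
          = ((Finset.range (LL n)).filter (fun p => w <+: (champPrefix n).drop p)).card := rfl
      omega

lemma cnt_mono {a b : ℕ} (h : a ≤ b) : cnt w a ≤ cnt w b :=
  Finset.card_le_card (Finset.filter_subset_filter _ (by simpa using Finset.range_subset_range.mpr h))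

lemma cnt_add_le (a t : ℕ) : cnt w (a + t) ≤ cnt w a + t := by
  classical
  unfold cnt
  have hsub : (Finset.range (a+t)).filter
      (fun i => List.ofFn (fun j : Fin w.length => champernowne (i + (j : ℕ))) = w)
      ⊆ ((Finset.range a).filter
        (fun i => List.ofFn (fun j : Fin w.length => champernowne (i + (j : ℕ))) = w))
        ∪ Finset.Ico a (a+t) := by
    intro i hi
    simp only [Finset.mem_filter, Finset.mem_range] at hi
    rcases Nat.lt_or_ge i a with h' | h'
    · exact Finset.mem_union_left _ (by simp only [Finset.mem_filter, Finset.mem_range]; exact ⟨h', hi.2⟩)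
    · exact Finset.mem_union_right _ (by simp only [Finset.mem_Ico]; omega)
  calc _ ≤ _ := Finset.card_le_card hsub
    _ ≤ _ + (Finset.Ico a (a+t)).card := Finset.card_union_le _ _
    _ ≤ _ + t := by rw [Nat.card_Ico]; omega

-- append bounds
lemma drop_append_ge {X Y : List (Fin 10)} {p : ℕ} (h : X.length ≤ p) :
    (X ++ Y).drop p = Y.drop (p - X.length) := by
  rw [List.drop_append, List.drop_eq_nil_of_le h, List.nil_append]

lemma drop_append_lt {X Y : List (Fin 10)} {p : ℕ} (h : p ≤ X.length) :
    (X ++ Y).drop p = X.drop p ++ Y := by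
  rw [List.drop_append, Nat.sub_eq_zero_of_le h, List.drop_zero]

lemma match_append_iff {X Y : List (Fin 10)} {p : ℕ} (h : p + w.length ≤ X.length) :
    (w <+: (X ++ Y).drop p) ↔ (w <+: X.drop p) := by
  rw [drop_append_lt (by omega)]
  constructor
  · intro hpre
    have hlen : w.length ≤ (X.drop p).length := by
      simp only [List.length_drop]; omega
    rw [List.prefix_iff_eq_take] at hpre ⊢
    rw [List.take_append, Nat.sub_eq_zero_of_le hlen, List.take_zero,
      List.append_nil] at hpre
    exact hpre
  · intro hpre
    exact hpre.trans (List.prefix_append _ _)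
end W

section W2
variable (w : List (Fin 10))

lemma occ_Ico_part (X Y : List (Fin 10)) :
    ((Finset.Ico X.length (X.length + Y.length)).filter
      (fun p => w <+: (X ++ Y).drop p)).card = occIn w Y := by
  classical
  unfold occIn
  apply Finset.card_bij' (fun p _ => p - X.length) (fun q _ => q + X.length)
  · intro p hp
    simp only [Finset.mem_filter, Finset.mem_Ico] at hp
    obtain ⟨⟨h1, h2⟩, h3⟩ := hp
    simp only [Finset.mem_filter, Finset.mem_range]
    rw [drop_append_ge h1] at h3
    exact ⟨by omega, h3⟩
  · intro q hq
    simp only [Finset.mem_filter, Finset.mem_range] at hq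
    simp only [Finset.mem_filter, Finset.mem_Ico]
    refine ⟨⟨by omega, by omega⟩, ?_⟩
    rw [drop_append_ge (by omega)]
    simpa using hq.2
  · intro p hp
    simp only [Finset.mem_filter, Finset.mem_Ico] at hp
    omega
  · intro q _
    omega

lemma occ_append_lower (X Y : List (Fin 10)) :
    occIn w X + occIn w Y ≤ occIn w (X ++ Y) := by
  classical
  have hsplit : occIn w (X ++ Y)
      = ((Finset.range X.length).filter (fun p => w <+: (X ++ Y).drop p)).card
        + ((Finset.Ico X.length (X.length + Y.length)).filter
            (fun p => w <+: (X ++ Y).drop p)).card := by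
    unfold occIn
    rw [← Finset.card_union_of_disjoint]
    · congr 1
      rw [← Finset.filter_union]
      congr 1
      rw [List.length_append, Finset.range_eq_Ico]
      rw [show Finset.Ico 0 (X.length + Y.length)
        = Finset.Ico 0 X.length ∪ Finset.Ico X.length (X.length + Y.length) from
        (Finset.Ico_union_Ico_eq_Ico (by omega) (by omega)).symm]
      rw [Finset.range_eq_Ico]
    · apply Finset.disjoint_filter_filter
      simp only [Finset.disjoint_left, Finset.mem_range, Finset.mem_Ico]
      intro a ha
      omega
  rw [hsplit, occ_Ico_part]
  have : occIn w X ≤ ((Finset.range X.length).filter (fun p => w <+: (X ++ Y).drop p)).card := by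
    apply Finset.card_le_card
    intro p hp
    simp only [occIn, Finset.mem_filter, Finset.mem_range] at hp ⊢
    refine ⟨hp.1, ?_⟩
    rw [drop_append_lt (by omega)]
    exact hp.2.trans (List.prefix_append _ _)
  omega

lemma occ_append_upper (X Y : List (Fin 10)) :
    occIn w (X ++ Y) ≤ occIn w X + occIn w Y + w.length := by
  classical
  have hsplit : occIn w (X ++ Y)
      = ((Finset.range X.length).filter (fun p => w <+: (X ++ Y).drop p)).card
        + ((Finset.Ico X.length (X.length + Y.length)).filter
            (fun p => w <+: (X ++ Y).drop p)).card := by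
    unfold occIn
    rw [← Finset.card_union_of_disjoint]
    · congr 1
      rw [← Finset.filter_union]
      congr 1
      rw [List.length_append, Finset.range_eq_Ico]
      rw [show Finset.Ico 0 (X.length + Y.length)
        = Finset.Ico 0 X.length ∪ Finset.Ico X.length (X.length + Y.length) from
        (Finset.Ico_union_Ico_eq_Ico (by omega) (by omega)).symm]
      rw [Finset.range_eq_Ico]
    · apply Finset.disjoint_filter_filter
      simp only [Finset.disjoint_left, Finset.mem_range, Finset.mem_Ico]
      intro a ha
      omega
  rw [hsplit, occ_Ico_part]
  have hmain : ((Finset.range X.length).filter (fun p => w <+: (X ++ Y).drop p)).card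
      ≤ occIn w X + w.length := by
    have hsub : (Finset.range X.length).filter (fun p => w <+: (X ++ Y).drop p)
        ⊆ ((Finset.range X.length).filter (fun p => w <+: X.drop p))
          ∪ Finset.Ico (X.length + 1 - w.length) X.length := by
      intro p hp
      simp only [Finset.mem_filter, Finset.mem_range] at hp
      rcases le_or_gt (p + w.length) X.length with h3 | h3
      · apply Finset.mem_union_left
        simp only [Finset.mem_filter, Finset.mem_range]
        exact ⟨hp.1, (match_append_iff w h3).mp hp.2⟩
      · exact Finset.mem_union_right _ (by simp only [Finset.mem_Ico]; omega)
    calc _ ≤ _ := Finset.card_le_card hsub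
      _ ≤ _ + (Finset.Ico (X.length + 1 - w.length) X.length).card := Finset.card_union_le _ _
      _ ≤ occIn w X + w.length := by
        rw [Nat.card_Ico]
        have : occIn w X = ((Finset.range X.length).filter (fun p => w <+: X.drop p)).card := rfl
        omega
  omega

lemma occ_champ_lower (n : ℕ) :
    (∑ m ∈ Finset.Icc 1 n, occIn w (sstr m)) ≤ occIn w (champPrefix n) := by
  induction n with
  | zero => simp
  | succ n ih =>
    rw [champPrefix_succ, Finset.sum_Icc_succ_top (by omega : 1 ≤ n + 1)]
    calc _ ≤ occIn w (champPrefix n) + occIn w (sstr (n+1)) := by omega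
      _ ≤ _ := occ_append_lower w _ _

lemma occ_champ_upper (n : ℕ) :
    occIn w (champPrefix n) ≤ (∑ m ∈ Finset.Icc 1 n, occIn w (sstr m)) + n * w.length := by
  induction n with
  | zero => simp [occIn, champPrefix]
  | succ n ih =>
    rw [champPrefix_succ, Finset.sum_Icc_succ_top (by omega : 1 ≤ n + 1)]
    calc occIn w (champPrefix n ++ sstr (n+1))
        ≤ occIn w (champPrefix n) + occIn w (sstr (n+1)) + w.length := occ_append_upper w _ _
      _ ≤ _ := by
        have := ih
        ring_nf
        omega
end W2

lemma key_decomp (j k c m : ℕ) (hc' : m / 10^j % 10^k = c) :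
    m = (m / 10^(j+k) * 10^k + c) * 10^j + m % 10^j := by
  have h2 : m / 10^j / 10^k = m / 10^(j+k) := by rw [Nat.div_div_eq_div_mul, pow_add]
  have h1 := Nat.div_add_mod (m / 10^j) (10^k)
  have h3 := Nat.div_add_mod m (10^j)
  rw [hc', h2] at h1
  calc m = 10^j * (m / 10^j) + m % 10^j := h3.symm
    _ = 10^j * (10^k * (m / 10^(j+k)) + c) + m % 10^j := by rw [h1]
    _ = (m / 10^(j+k) * 10^k + c) * 10^j + m % 10^j := by ring

lemma Hcount_upper (j n k c : ℕ) :
    ((Finset.Icc 1 n).filter (fun m => m / 10^j % 10^k = c ∧ 10^(k-1) ≤ m / 10^j)).card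
      ≤ (n / 10^(j+k) + 1) * 10^j := by
  classical
  have hE : 0 < 10^j := Nat.pow_pos (by norm_num)
  have hcard : ((Finset.range (n / 10^(j+k) + 1)) ×ˢ (Finset.range (10^j))).card
      = (n / 10^(j+k) + 1) * 10^j := by
    rw [Finset.card_product, Finset.card_range, Finset.card_range]
  rw [← hcard]
  apply Finset.card_le_card_of_injOn (fun m => (m / 10^(j+k), m % 10^j))
  · intro m hm
    simp only [Finset.mem_coe, Finset.mem_filter, Finset.mem_Icc] at hm
    simp only [Finset.mem_coe, Finset.mem_product, Finset.mem_range]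
    constructor
    · have := Nat.div_le_div_right (c := 10^(j+k)) hm.1.2
      omega
    · exact Nat.mod_lt _ hE
  · intro m1 hm1 m2 hm2 heq
    simp only [Finset.mem_coe, Finset.mem_filter, Finset.mem_Icc] at hm1 hm2
    simp only [Prod.mk.injEq] at heq
    rw [key_decomp j k c m1 hm1.2.1, key_decomp j k c m2 hm2.2.1, heq.1, heq.2]

lemma Hcount_lower (j n k c : ℕ) (hc : c < 10^k) (hk : 0 < k) :
    (n / 10^(j+k)) * 10^j
      ≤ ((Finset.Icc 1 n).filter
          (fun m => m / 10^j % 10^k = c ∧ 10^(k-1) ≤ m / 10^j)).card + 10^j := by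
  classical
  set E := 10^j with hEdef
  set B := 10^(j+k) with hBdef
  have hE : 0 < E := Nat.pow_pos (by norm_num)
  have hB : 0 < B := Nat.pow_pos (by norm_num)
  have hBE : B = E * 10^k := by rw [hBdef, hEdef, pow_add]
  set Q := n / B with hQdef
  rcases Nat.eq_zero_or_pos Q with hQ | hQ
  · rw [hQ]; omega
  have hcard : ((Finset.Ico 1 Q) ×ˢ (Finset.range E)).card = (Q - 1) * E := by
    rw [Finset.card_product, Nat.card_Ico, Finset.card_range]
  have hcEr : ∀ r : ℕ, r < E → c * E + r < B := by
    intro r hr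
    have h1 : c * E + r < (c + 1) * E := by
      have : (c + 1) * E = c * E + E := by ring
      omega
    have h2 : (c + 1) * E ≤ 10^k * E := Nat.mul_le_mul_right _ (by omega)
    have h3 : 10^k * E = B := by rw [hBE]; ring
    omega
  have hdivE : ∀ a r : ℕ, r < E → (a * B + c * E + r) / E = a * 10^k + c := by
    intro a r hr
    rw [show a * B + c * E + r = r + (a * 10^k + c) * E by rw [hBE]; ring,
      Nat.add_mul_div_right _ _ hE, Nat.div_eq_of_lt hr, zero_add]
  have hmodE : ∀ a r : ℕ, r < E → (a * B + c * E + r) % E = r := by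
    intro a r hr
    rw [show a * B + c * E + r = r + (a * 10^k + c) * E by rw [hBE]; ring,
      Nat.add_mul_mod_self_right, Nat.mod_eq_of_lt hr]
  have hdivB : ∀ a r : ℕ, r < E → (a * B + c * E + r) / B = a := by
    intro a r hr
    rw [show a * B + c * E + r = (c * E + r) + a * B by ring,
      Nat.add_mul_div_right _ _ hB, Nat.div_eq_of_lt (hcEr r hr), zero_add]
  have hinj : ((Finset.Ico 1 Q) ×ˢ (Finset.range E)).card
      ≤ ((Finset.Icc 1 n).filter
          (fun m => m / 10^j % 10^k = c ∧ 10^(k-1) ≤ m / 10^j)).card := by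
    apply Finset.card_le_card_of_injOn (fun ar => ar.1 * B + c * E + ar.2)
    · rintro ⟨a, r⟩ har
      simp only [Finset.mem_coe, Finset.mem_product, Finset.mem_Ico, Finset.mem_range] at har
      obtain ⟨⟨ha1, ha2⟩, hr⟩ := har
      simp only [Finset.mem_coe, Finset.mem_filter, Finset.mem_Icc]
      have hmpos : 1 ≤ a * B + c * E + r := by
        have := Nat.mul_pos (show 0 < a by omega) hB
        omega
      have hmn : a * B + c * E + r ≤ n := by
        have h1 : a * B + c * E + r < (a + 1) * B := by
          have : (a + 1) * B = a * B + B := by ring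
          have := hcEr r hr
          omega
        have h2 : (a + 1) * B ≤ Q * B := Nat.mul_le_mul_right _ (by omega)
        have h3 : Q * B ≤ n := Nat.div_mul_le_self n B
        omega
      refine ⟨⟨hmpos, hmn⟩, ?_, ?_⟩
      · rw [← hEdef, hdivE a r hr, show a * 10^k + c = c + 10^k * a by ring,
          Nat.add_mul_mod_self_left, Nat.mod_eq_of_lt hc]
      · rw [← hEdef, hdivE a r hr]
        have h1 : 10^(k-1) ≤ 10^k := Nat.pow_le_pow_right (by norm_num) (by omega)
        have h2 : 10^k ≤ a * 10^k := Nat.le_mul_of_pos_left _ (by omega)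
        omega
    · rintro ⟨a1, r1⟩ h1 ⟨a2, r2⟩ h2 heq
      simp only [Finset.mem_coe, Finset.mem_product, Finset.mem_Ico, Finset.mem_range] at h1 h2
      simp only at heq
      have e1 := hdivB a1 r1 h1.2
      have e2 := hdivB a2 r2 h2.2
      have f1 := hmodE a1 r1 h1.2
      have f2 := hmodE a2 r2 h2.2
      rw [heq] at e1 f1
      have ha : a1 = a2 := by omega
      have hr : r1 = r2 := by omega
      simp [ha, hr]
  calc Q * E ≤ (Q - 1) * E + E := by
        have h' : Q * E = (Q - 1 + 1) * E := by congr 1; omega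
        rw [h', add_mul, one_mul]
    _ = ((Finset.Ico 1 Q) ×ˢ (Finset.range E)).card + E := by rw [← hcard]
    _ ≤ _ + E := Nat.add_le_add_right hinj E

lemma geo_sum_le (R : ℕ) : ∑ j ∈ Finset.range R, 10^j ≤ 10^R := by
  induction R with
  | zero => simp
  | succ R ih =>
    rw [Finset.sum_range_succ, pow_succ]
    have : 10^R * 10 = 10^R + 10^R * 9 := by ring
    omega

lemma div_mul_le (n k j : ℕ) : n / 10^(j+k) * 10^j ≤ n / 10^k := by
  rw [show (10:ℕ)^(j+k) = 10^k * 10^j by rw [pow_add]; ring, ← Nat.div_div_eq_div_mul]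
  exact Nat.div_mul_le_self _ _

lemma div_mul_ge (n k j : ℕ) : n / 10^k ≤ n / 10^(j+k) * 10^j + 10^j := by
  have hE : 0 < 10^j := Nat.pow_pos (by norm_num)
  rw [show (10:ℕ)^(j+k) = 10^k * 10^j by rw [pow_add]; ring, ← Nat.div_div_eq_div_mul]
  have h := Nat.div_add_mod (n / 10^k) (10^j)
  have h2 : (n / 10^k) % 10^j < 10^j := Nat.mod_lt _ hE
  have h3 : n / 10^k / 10^j * 10^j = 10^j * (n / 10^k / 10^j) := by ring
  omega

lemma wnum_lt (w : List (Fin 10)) : wnum w < 10 ^ w.length := by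
  rw [wnum, ← wval_length w]
  exact Nat.ofDigits_lt_base_pow_length (by norm_num) (wval_lt w)

lemma LL_eq_sum (n : ℕ) : LL n = ∑ i ∈ Finset.range n, (Nat.log 10 (i+1) + 1) := by
  induction n with
  | zero => simpa using LL_zero
  | succ n ih => rw [LL_succ, Finset.sum_range_succ, ih]


lemma Rn_le (n : ℕ) (hn : 1 ≤ n) : (Nat.log 10 n + 1) * n ≤ LL n + 10 * n := by
  classical
  have hterm : ∀ i ∈ Finset.range n, Nat.log 10 n + 1
      = (Nat.log 10 (i+1) + 1) + (Nat.log 10 n - Nat.log 10 (i+1)) := by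
    intro i hi
    simp only [Finset.mem_range] at hi
    have := Nat.log_mono_right (b := 10) (show i+1 ≤ n by omega)
    omega
  have h1 : (Nat.log 10 n + 1) * n = ∑ _i ∈ Finset.range n, (Nat.log 10 n + 1) := by
    rw [Finset.sum_const, Finset.card_range, smul_eq_mul, mul_comm]
  rw [h1, Finset.sum_congr rfl hterm, Finset.sum_add_distrib, LL_eq_sum]
  have h2 : ∑ i ∈ Finset.range n, (Nat.log 10 n - Nat.log 10 (i+1)) ≤ 10 * n := by
    have hterm2 : ∀ i ∈ Finset.range n, Nat.log 10 n - Nat.log 10 (i+1)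
        = ∑ t ∈ Finset.range (Nat.log 10 n), (if Nat.log 10 (i+1) ≤ t then 1 else 0) := by
      intro i hi
      rw [← Finset.card_filter]
      have heq : (Finset.range (Nat.log 10 n)).filter (fun t => Nat.log 10 (i+1) ≤ t)
          = Finset.Ico (Nat.log 10 (i+1)) (Nat.log 10 n) := by
        ext t
        simp only [Finset.mem_filter, Finset.mem_range, Finset.mem_Ico]
        omega
      rw [heq, Nat.card_Ico]
    rw [Finset.sum_congr rfl hterm2, Finset.sum_comm]
    calc _ ≤ ∑ t ∈ Finset.range (Nat.log 10 n), 10^(t+1) := by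
          apply Finset.sum_le_sum
          intro t _
          rw [← Finset.card_filter]
          have hsub : (Finset.range n).filter (fun i => Nat.log 10 (i+1) ≤ t)
              ⊆ Finset.range (10^(t+1)) := by
            intro i hi
            simp only [Finset.mem_filter, Finset.mem_range] at hi ⊢
            have hx := Nat.lt_pow_succ_log_self (b := 10) (by norm_num) (i+1)
            have hle : 10^(Nat.log 10 (i+1) + 1) ≤ 10^(t+1) :=
              Nat.pow_le_pow_right (by norm_num) (by omega)
            omega
          calc _ ≤ (Finset.range (10^(t+1))).card := Finset.card_le_card hsub
            _ = 10^(t+1) := Finset.card_range _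
      _ = 10 * ∑ t ∈ Finset.range (Nat.log 10 n), 10^t := by
          rw [Finset.mul_sum]
          apply Finset.sum_congr rfl
          intro t _
          rw [pow_succ]
          ring
      _ ≤ 10 * 10^(Nat.log 10 n) := by
          have := geo_sum_le (Nat.log 10 n)
          omega
      _ ≤ 10 * n := by
          have := Nat.pow_log_le_self 10 (show n ≠ 0 by omega)
          omega
  omega

/-- Step A: sum over numbers = sum over cut positions -/
lemma sum_occ_eq (w : List (Fin 10)) (hw : w ≠ []) (n : ℕ) (hn : 1 ≤ n) :
    (∑ m ∈ Finset.Icc 1 n, occIn w (sstr m))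
      = ∑ j ∈ Finset.range (Nat.log 10 n + 1),
          ((Finset.Icc 1 n).filter (fun m =>
            m / 10 ^ j % 10 ^ w.length = wnum w ∧ 10 ^ (w.length - 1) ≤ m / 10 ^ j)).card := by
  classical
  set R := Nat.log 10 n + 1 with hR
  have h1 : ∀ m ∈ Finset.Icc 1 n, occIn w (sstr m)
      = ∑ j ∈ Finset.range R, (if m / 10 ^ j % 10 ^ w.length = wnum w
          ∧ 10 ^ (w.length - 1) ≤ m / 10 ^ j then 1 else 0) := by
    intro m hm
    simp only [Finset.mem_Icc] at hm
    rw [occIn_sstr w hw m R hm.1 (by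
      rw [Nat.digits_len 10 m (by norm_num) (by omega)]
      have := Nat.log_mono_right (b := 10) hm.2
      omega)]
    exact Finset.card_filter _ _
  rw [Finset.sum_congr rfl h1, Finset.sum_comm]
  apply Finset.sum_congr rfl
  intro j _
  exact (Finset.card_filter _ _).symm

lemma master_upper (w : List (Fin 10)) (hw : w ≠ []) (n : ℕ) (hn : 1 ≤ n) :
    10 ^ w.length * occIn w (champPrefix n)
      ≤ LL n + (w.length + 30) * 10 ^ w.length * n := by
  set k := w.length with hk
  set P := 10 ^ k with hP
  set R := Nat.log 10 n + 1 with hR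
  have hP1 : 1 ≤ P := Nat.one_le_pow _ _ (by norm_num)
  have hPdiv : n / P = n / 10 ^ k := by rw [hP]
  have h10R : 10 ^ R ≤ 10 * n := by
    rw [hR, pow_succ]
    have := Nat.pow_log_le_self 10 (show n ≠ 0 by omega)
    omega
  have hsum : (∑ m ∈ Finset.Icc 1 n, occIn w (sstr m)) ≤ R * (n / P) + 20 * n := by
    rw [sum_occ_eq w hw n hn]
    calc _ ≤ ∑ j ∈ Finset.range R, ((n / 10^(j+k) + 1) * 10^j) :=
          Finset.sum_le_sum (fun j _ => Hcount_upper j n k (wnum w))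
      _ ≤ ∑ j ∈ Finset.range R, (n / P + 2 * 10^j) := by
          apply Finset.sum_le_sum
          intro j _
          have h1 := div_mul_le n k j
          have h2 : (n / 10^(j+k) + 1) * 10^j = n / 10^(j+k) * 10^j + 10^j := by ring
          omega
      _ ≤ R * (n / P) + 20 * n := by
          rw [Finset.sum_add_distrib, Finset.sum_const, Finset.card_range, smul_eq_mul,
            ← Finset.mul_sum]
          have := geo_sum_le R
          omega
  have hocc : occIn w (champPrefix n) ≤ R * (n / P) + 20 * n + n * k := by
    have hkk : n * w.length = n * k := by rw [hk]
    have := occ_champ_upper w n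
    omega
  have hRn : R * n ≤ LL n + 10 * n := Rn_le n hn
  calc 10 ^ w.length * occIn w (champPrefix n)
      = P * occIn w (champPrefix n) := rfl
    _ ≤ P * (R * (n / P) + 20 * n + n * k) := Nat.mul_le_mul_left _ hocc
    _ = R * (P * (n / P)) + 20 * n * P + n * k * P := by ring
    _ ≤ R * n + 20 * n * P + n * k * P := by
        have h1 : P * (n / P) ≤ n := Nat.mul_div_le n P
        have h2 : R * (P * (n/P)) ≤ R * n := Nat.mul_le_mul_left _ h1
        omega
    _ ≤ LL n + 10 * n + 20 * n * P + n * k * P := by omega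
    _ ≤ LL n + (k + 30) * P * n := by
        have e1 : (k + 30) * P * n = n * k * P + 30 * (n * P) := by ring
        have e2 : 20 * n * P = 20 * (n * P) := by ring
        have e3 : n * 1 ≤ n * P := Nat.mul_le_mul_left n hP1
        omega

lemma master_lower (w : List (Fin 10)) (hw : w ≠ []) (n : ℕ) (hn : 1 ≤ n) :
    LL n ≤ 10 ^ w.length * occIn w (champPrefix n) + (w.length + 22) * 10 ^ w.length * n := by
  set k := w.length with hk
  set P := 10 ^ k with hP
  set R := Nat.log 10 n + 1 with hR
  have hk1 : 0 < k := by
    rw [hk]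
    exact List.length_pos_iff.mpr hw
  have hP1 : 1 ≤ P := Nat.one_le_pow _ _ (by norm_num)
  have hPdiv : n / P = n / 10 ^ k := by rw [hP]
  have h10R : 10 ^ R ≤ 10 * n := by
    rw [hR, pow_succ]
    have := Nat.pow_log_le_self 10 (show n ≠ 0 by omega)
    omega
  have hsum : R * (n / P) ≤ (∑ m ∈ Finset.Icc 1 n, occIn w (sstr m)) + 2 * 10 ^ R := by
    rw [sum_occ_eq w hw n hn]
    have hterm : ∀ j ∈ Finset.range R, n / P
        ≤ ((Finset.Icc 1 n).filter (fun m =>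
            m / 10 ^ j % 10 ^ k = wnum w ∧ 10 ^ (k - 1) ≤ m / 10 ^ j)).card + 2 * 10^j := by
      intro j _
      have h1 := Hcount_lower j n k (wnum w) (wnum_lt w) hk1
      have h2 := div_mul_ge n k j
      omega
    calc R * (n / P) = ∑ _j ∈ Finset.range R, (n / P) := by
          rw [Finset.sum_const, Finset.card_range, smul_eq_mul, mul_comm]
      _ ≤ ∑ j ∈ Finset.range R, (((Finset.Icc 1 n).filter (fun m =>
            m / 10 ^ j % 10 ^ k = wnum w ∧ 10 ^ (k - 1) ≤ m / 10 ^ j)).card + 2 * 10^j) :=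
          Finset.sum_le_sum hterm
      _ ≤ (∑ j ∈ Finset.range R, ((Finset.Icc 1 n).filter (fun m =>
            m / 10 ^ j % 10 ^ k = wnum w ∧ 10 ^ (k - 1) ≤ m / 10 ^ j)).card) + 2 * 10 ^ R := by
          rw [Finset.sum_add_distrib]
          have h3 : ∑ j ∈ Finset.range R, 2 * 10 ^ j = 2 * ∑ j ∈ Finset.range R, 10 ^ j := by
            rw [Finset.mul_sum]
          have := geo_sum_le R
          omega
  have hocc : R * (n / P) ≤ occIn w (champPrefix n) + 2 * 10 ^ R := by
    have := occ_champ_lower w n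
    omega
  have hRn : R * n ≤ LL n + 10 * n := Rn_le n hn
  have hRle : R ≤ 2 * n := by
    have : Nat.log 10 n ≤ n := Nat.log_le_self 10 n
    omega
  have hnP : n ≤ P * (n / P) + P := by
    have h := Nat.div_add_mod n P
    have h2 : n % P < P := Nat.mod_lt _ (by omega)
    have h3 : P * (n / P) = n / P * P := by ring
    omega
  calc LL n ≤ R * n := by
        have h0 : n * 1 ≤ n * R := Nat.mul_le_mul_left n (by omega)
        have : LL n = ∑ i ∈ Finset.range n, (Nat.log 10 (i+1) + 1) := LL_eq_sum n
        rw [this]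
        calc ∑ i ∈ Finset.range n, (Nat.log 10 (i+1) + 1)
            ≤ ∑ _i ∈ Finset.range n, R := by
              apply Finset.sum_le_sum
              intro i hi
              simp only [Finset.mem_range] at hi
              have := Nat.log_mono_right (b := 10) (show i+1 ≤ n by omega)
              omega
          _ = n * R := by rw [Finset.sum_const, Finset.card_range, smul_eq_mul]
          _ = R * n := by ring
    _ ≤ R * (P * (n / P) + P) := by
        have := Nat.mul_le_mul_left R hnP
        omega
    _ = P * (R * (n / P)) + R * P := by ring
    _ ≤ P * (occIn w (champPrefix n) + 2 * 10 ^ R) + R * P := by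
        have := Nat.mul_le_mul_left P hocc
        omega
    _ = P * occIn w (champPrefix n) + 2 * 10 ^ R * P + R * P := by ring
    _ ≤ P * occIn w (champPrefix n) + (k + 22) * P * n := by
        have h1 := Nat.mul_le_mul_right P (show 2 * 10 ^ R ≤ 20 * n by omega)
        have h2 := Nat.mul_le_mul_right P hRle
        have e1 : (k + 22) * P * n = n * k * P + 22 * (n * P) := by ring
        have e2 : 20 * n * P = 20 * (n * P) := by ring
        have e3 : 2 * n * P = 2 * (n * P) := by ring
        have e4 : 0 ≤ n * k * P := Nat.zero_le _
        omega

lemma LL_one : LL 1 = 1 := by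
  rw [LL_succ 0, LL_zero, Nat.log_one_right]

lemma nn_spec (N : ℕ) (hN : 1 ≤ N) :
    1 ≤ nn N ∧ LL (nn N) ≤ N ∧ N < LL (nn N + 1) := by
  classical
  have h0 : LL 1 ≤ N := by rw [LL_one]; exact hN
  have hg1 : 1 ≤ nn N := Nat.le_findGreatest hN h0
  have hg2 : LL (nn N) ≤ N := Nat.findGreatest_spec (P := fun n => LL n ≤ N) hN h0
  have hg3 : N < LL (nn N + 1) := by
    rcases le_or_gt (nn N + 1) N with h | h
    · by_contra hcon
      push_neg at hcon
      exact Nat.findGreatest_is_greatest (Nat.lt_succ_self _) h hcon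
    · have hle : nn N ≤ N := Nat.findGreatest_le N
      have heq : nn N = N := by omega
      rw [heq]
      have := le_LL (N + 1)
      omega
  exact ⟨hg1, hg2, hg3⟩

lemma nn_ge {M N : ℕ} (h : LL M ≤ N) : M ≤ nn N :=
  Nat.le_findGreatest (le_trans (le_LL M) h) h

lemma master_general (w : List (Fin 10)) (hw : w ≠ []) (N : ℕ) (hN : 1 ≤ N) :
    10 ^ w.length * cnt w N ≤ N + (2 * w.length + 40) * 10 ^ w.length * nn N ∧
    N ≤ 10 ^ w.length * cnt w N + (2 * w.length + 40) * 10 ^ w.length * nn N := by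
  obtain ⟨hn1, hLLn, hLLn1⟩ := nn_spec N hN
  set n := nn N with hn
  have hP1 : 1 ≤ (10 ^ w.length) := Nat.one_le_pow _ _ (by norm_num)
  have hgap3 : N - LL n ≤ 3 * n := by
    have h1 := LL_succ n
    have h2 : Nat.log 10 (n+1) ≤ n + 1 := Nat.log_le_self _ _
    omega
  have hcntle : cnt w N ≤ cnt w (LL n) + (N - LL n) := by
    calc cnt w N = cnt w (LL n + (N - LL n)) := by rw [Nat.add_sub_cancel' hLLn]
      _ ≤ cnt w (LL n) + (N - LL n) := cnt_add_le w _ _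
  have hcntge : cnt w (LL n) ≤ cnt w N := cnt_mono w hLLn
  have hup := master_upper w hw n hn1
  have hlow := master_lower w hw n hn1
  have hoccle := occIn_le_cnt w n
  have hocc2 := cnt_le_occIn w n
  constructor
  · -- upper
    calc (10 ^ w.length) * cnt w N ≤ (10 ^ w.length) * (cnt w (LL n) + (N - LL n)) := Nat.mul_le_mul_left _ hcntle
      _ ≤ (10 ^ w.length) * (occIn w (champPrefix n) + w.length + 3 * n) := by
          apply Nat.mul_le_mul_left
          omega
      _ = (10 ^ w.length) * occIn w (champPrefix n) + w.length * (10 ^ w.length) + 3 * (n * (10 ^ w.length)) := by ring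
      _ ≤ LL n + (w.length + 30) * (10 ^ w.length) * n + w.length * (10 ^ w.length) + 3 * (n * (10 ^ w.length)) := by omega
      _ ≤ N + (2 * w.length + 40) * (10 ^ w.length) * n := by
          have e1 : (w.length + 30) * (10 ^ w.length) * n = w.length * ((10 ^ w.length) * n) + 30 * (n * (10 ^ w.length)) := by ring
          have e2 : (2 * w.length + 40) * (10 ^ w.length) * n = 2 * (w.length * ((10 ^ w.length) * n)) + 40 * (n * (10 ^ w.length)) := by ring
          have e3 : w.length * (10 ^ w.length) * 1 ≤ w.length * (10 ^ w.length) * n := Nat.mul_le_mul_left _ hn1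
          have e4 : w.length * (10 ^ w.length) * n = w.length * ((10 ^ w.length) * n) := by ring
          have e5 : w.length * (10 ^ w.length) * 1 = w.length * (10 ^ w.length) := by ring
          omega
  · -- lower
    calc N = LL n + (N - LL n) := by omega
      _ ≤ (10 ^ w.length) * occIn w (champPrefix n) + (w.length + 22) * (10 ^ w.length) * n + 3 * n := by omega
      _ ≤ (10 ^ w.length) * cnt w N + (w.length + 22) * (10 ^ w.length) * n + 3 * n := by
          have : (10 ^ w.length) * occIn w (champPrefix n) ≤ (10 ^ w.length) * cnt w N :=
            Nat.mul_le_mul_left _ (le_trans hoccle hcntge)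
          omega
      _ ≤ (10 ^ w.length) * cnt w N + (2 * w.length + 40) * (10 ^ w.length) * n := by
          have e1 : (2 * w.length + 40) * (10 ^ w.length) * n = (w.length + 22) * (10 ^ w.length) * n + (w.length + 18) * ((10 ^ w.length) * n) := by ring
          have e2 : 3 * (n * 1) ≤ 3 * (n * (10 ^ w.length)) := Nat.mul_le_mul_left _ (Nat.mul_le_mul_left _ hP1)
          have e3 : 3 * (n * (10 ^ w.length)) ≤ (w.length + 18) * ((10 ^ w.length) * n) := by
            have : 3 ≤ w.length + 18 := by omega
            have h4 : 3 * ((10 ^ w.length) * n) ≤ (w.length + 18) * ((10 ^ w.length) * n) := Nat.mul_le_mul_right _ this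
            have h5 : n * (10 ^ w.length) = (10 ^ w.length) * n := by ring
            omega
          have e4 : n * 1 = n := by ring
          omega

lemma LL_grow (T n : ℕ) : (n - 10 ^ T) * (T + 1) ≤ LL n := by
  rw [LL_eq_sum]
  have hsub : Finset.Ico (10 ^ T - 1) n ⊆ Finset.range n := by
    intro i hi
    simp only [Finset.mem_Ico] at hi
    simp only [Finset.mem_range]
    omega
  have hterm : ∀ i ∈ Finset.Ico (10 ^ T - 1) n, T + 1 ≤ Nat.log 10 (i+1) + 1 := by
    intro i hi
    simp only [Finset.mem_Ico] at hi
    have h10 : 1 ≤ 10 ^ T := Nat.one_le_pow _ _ (by norm_num)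
    have : 10 ^ T ≤ i + 1 := by omega
    have := (Nat.le_log_iff_pow_le (by norm_num) (by omega : i + 1 ≠ 0)).mpr this
    omega
  have h10' : 1 ≤ 10 ^ T := Nat.one_le_pow _ _ (by norm_num)
  calc (n - 10 ^ T) * (T + 1) ≤ (Finset.Ico (10 ^ T - 1) n).card * (T + 1) := by
        rw [Nat.card_Ico]
        apply Nat.mul_le_mul_right
        omega
    _ = (Finset.Ico (10 ^ T - 1) n).card • (T + 1) := by rw [smul_eq_mul]
    _ ≤ ∑ i ∈ Finset.Ico (10 ^ T - 1) n, (Nat.log 10 (i+1) + 1) :=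
        Finset.card_nsmul_le_sum _ _ _ hterm
    _ ≤ ∑ i ∈ Finset.range n, (Nat.log 10 (i+1) + 1) := Finset.sum_le_sum_of_subset hsub

lemma LL_ge_lin (T n : ℕ) (h : 10 ^ T * (T + 1) ≤ n) : T * n ≤ LL n := by
  have h1 := LL_grow T n
  have e2 : (n - 10 ^ T) * (T + 1) = n * (T + 1) - 10 ^ T * (T + 1) := Nat.sub_mul _ _ _
  have e1 : n * (T + 1) = T * n + n := by ring
  omega

lemma tendsto_LL_div : Tendsto (fun n : ℕ => (LL n : ℝ) / n) atTop atTop := by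
  rw [Filter.tendsto_atTop_atTop]
  intro b
  set T := ⌈b⌉₊ with hT
  refine ⟨max 1 (10 ^ T * (T + 1)), fun n hn => ?_⟩
  have hn1 : 1 ≤ n := le_trans (le_max_left _ _) hn
  have hTn : 10 ^ T * (T + 1) ≤ n := le_trans (le_max_right _ _) hn
  have h1 : T * n ≤ LL n := LL_ge_lin T n hTn
  have hnR : (0:ℝ) < n := by positivity
  rw [le_div_iff₀ hnR]
  calc b * n ≤ (T : ℝ) * n := by
        apply mul_le_mul_of_nonneg_right (Nat.le_ceil b) (le_of_lt hnR)
    _ ≤ (LL n : ℝ) := by exact_mod_cast h1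

lemma tendsto_ratio : Tendsto (fun n : ℕ => (n : ℝ) / LL n) atTop (nhds 0) := by
  have h := tendsto_LL_div.inv_tendsto_atTop
  apply h.congr
  intro n
  simp [Pi.inv_apply, inv_div]

lemma tendsto_nn : Tendsto nn atTop atTop := by
  rw [Filter.tendsto_atTop_atTop]
  intro b
  exact ⟨LL b, fun N hN => nn_ge hN⟩

theorem champ_tendsto (w : List (Fin 10)) (hw : w ≠ []) :
    Tendsto (fun N : ℕ => (cnt w N : ℝ) / N) atTop (nhds (((1:ℝ) / 10) ^ w.length)) := by
  have hval : ((1:ℝ) / 10) ^ w.length = ((10:ℝ) ^ w.length)⁻¹ := by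
    rw [one_div, inv_pow]
  have hPpos : (0:ℝ) < (10:ℝ) ^ w.length := by positivity
  have hP1 : (1:ℝ) ≤ (10:ℝ) ^ w.length := one_le_pow₀ (by norm_num)
  rw [hval, ← tendsto_sub_nhds_zero_iff]
  apply squeeze_zero_norm'
    (a := fun N => (((2 * w.length + 40) * 10 ^ w.length : ℕ) : ℝ)
      * ((nn N : ℝ) / (LL (nn N) : ℝ)))
  · filter_upwards [Filter.eventually_ge_atTop 1] with N hN
    obtain ⟨hm1, hm2⟩ := master_general w hw N hN
    obtain ⟨hn1, hLLn, -⟩ := nn_spec N hN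
    have hNpos : (0:ℝ) < (N:ℝ) := by exact_mod_cast hN
    have hLLpos : (0:ℝ) < (LL (nn N) : ℝ) := by
      have h1 := le_LL (nn N)
      have h2 : (1:ℕ) ≤ LL (nn N) := by omega
      exact_mod_cast h2
    have hA : ((10 ^ w.length * cnt w N : ℕ) : ℝ)
        ≤ ((N + (2 * w.length + 40) * 10 ^ w.length * nn N : ℕ) : ℝ) := Nat.cast_le.mpr hm1
    have hB : ((N : ℕ) : ℝ)
        ≤ ((10 ^ w.length * cnt w N + (2 * w.length + 40) * 10 ^ w.length * nn N : ℕ) : ℝ) :=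
      Nat.cast_le.mpr hm2
    push_cast at hA hB
    have habs : |(10:ℝ) ^ w.length * (cnt w N : ℝ) - (N:ℝ)|
        ≤ (((2 * w.length + 40) * 10 ^ w.length : ℕ) : ℝ) * (nn N : ℝ) := by
      rw [abs_le]
      push_cast
      constructor <;> linarith
    have heq : (cnt w N : ℝ) / N - ((10:ℝ) ^ w.length)⁻¹
        = ((10:ℝ) ^ w.length * (cnt w N) - N) / ((10:ℝ) ^ w.length * N) := by
      field_simp
    rw [heq, norm_div, Real.norm_eq_abs, Real.norm_eq_abs]
    rw [abs_of_pos (by positivity : (0:ℝ) < (10:ℝ) ^ w.length * N)]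
    calc |(10:ℝ) ^ w.length * (cnt w N) - N| / ((10:ℝ) ^ w.length * N)
        ≤ ((((2 * w.length + 40) * 10 ^ w.length : ℕ) : ℝ) * (nn N : ℝ))
            / ((10:ℝ) ^ w.length * N) := by
          exact (div_le_div_iff_of_pos_right (by positivity)).mpr habs
      _ ≤ (((2 * w.length + 40) * 10 ^ w.length : ℕ) : ℝ) * (nn N : ℝ) / (LL (nn N) : ℝ) := by
          apply div_le_div_of_nonneg_left (by positivity) hLLpos
          calc (LL (nn N) : ℝ) ≤ (N : ℝ) := by exact_mod_cast hLLn
            _ = 1 * N := by ring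
            _ ≤ (10:ℝ) ^ w.length * N := by
                apply mul_le_mul_of_nonneg_right hP1 (le_of_lt hNpos)
      _ = (((2 * w.length + 40) * 10 ^ w.length : ℕ) : ℝ)
            * ((nn N : ℝ) / (LL (nn N) : ℝ)) := by rw [mul_div_assoc]
  · have hcomp : Tendsto (fun N => ((nn N : ℝ) / (LL (nn N) : ℝ))) atTop (nhds 0) :=
      tendsto_ratio.comp tendsto_nn
    have h2 := hcomp.const_mul (((2 * w.length + 40) * 10 ^ w.length : ℕ) : ℝ)
    rwa [mul_zero] at h2


/-- Champernowne's theorem: the base-10 Champernowne sequence is normal in base 10. -/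
theorem champernowne_normal : IsNormal 10 champernowne := by
  intro w hw
  have h := champ_tendsto w hw
  have : ((1 : ℝ) / ((10:ℕ) : ℝ)) ^ w.length = ((1:ℝ)/10) ^ w.length := by norm_num
  simpa [cnt, this] using h
end

section
/- If a sequence d : ℕ → Fin b (b ≥ 2) is normal in base b, then for every gap k : ℕ and every pair of symbols a₁ a₂ : Fin b, the pairs of outcomes separated by k positions are uniformly distributed: the number of indices i < N with d(i) = a₁ and d(i + k + 1) = a₂, divided by N, tends to 1/b² as N → ∞. -/
open Finset Filter

lemma ofFn_eq_iff' {α : Type*} (w : List α) (f : Fin w.length → α) :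
    List.ofFn f = w ↔ ∀ j : Fin w.length, f j = w.get j := by
  constructor
  · intro h j
    have := List.get_of_eq h (Fin.cast (by simp) j)
    simpa [List.get_ofFn] using this
  · intro h
    apply List.ext_get (by simp)
    intro j h1 h2
    simp [List.get_ofFn, h]

section aux
variable {b : ℕ} (d : ℕ → Fin b) (k : ℕ) (a₁ a₂ : Fin b)

/-- the word with first letter a₁, middle f, last letter a₂ -/
def gword (f : Fin k → Fin b) : Fin (k + 2) → Fin b :=
  fun j => if h0 : (j : ℕ) = 0 then a₁ else
    if hk : (j : ℕ) = k + 1 then a₂ else f ⟨(j : ℕ) - 1, by omega⟩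

lemma gword_spec (f : Fin k → Fin b) (i : ℕ) :
    (∀ j : Fin (k + 2), d (i + (j : ℕ)) = gword k a₁ a₂ f j) ↔
      (d i = a₁ ∧ (∀ t : Fin k, d (i + 1 + (t : ℕ)) = f t) ∧ d (i + k + 1) = a₂) := by
  constructor
  · intro h
    refine ⟨?_, fun t => ?_, ?_⟩
    · have := h ⟨0, by omega⟩
      simpa [gword] using this
    · have := h ⟨(t : ℕ) + 1, by omega⟩
      have ht : (t : ℕ) < k := t.isLt
      simp only [gword] at this
      rw [dif_neg (by omega), dif_neg (by omega)] at this
      have : d (i + ((t : ℕ) + 1)) = f ⟨(t : ℕ) + 1 - 1, by omega⟩ := this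
      have h2 : (⟨(t : ℕ) + 1 - 1, by omega⟩ : Fin k) = t := by ext; simp
      rw [h2] at this
      rw [show i + 1 + (t : ℕ) = i + ((t : ℕ) + 1) by omega]
      exact this
    · have := h ⟨k + 1, by omega⟩
      rw [show i + k + 1 = i + (k + 1) by omega]
      simpa [gword] using this
  · rintro ⟨h1, h2, h3⟩ j
    rcases Nat.eq_zero_or_pos (j : ℕ) with h0 | h0
    · simp [gword, h0, h1]
    rcases eq_or_ne (j : ℕ) (k + 1) with hk | hk
    · simp only [gword]
      rw [dif_neg (by omega), dif_pos hk, hk, show i + (k + 1) = i + k + 1 by omega]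
      exact h3
    · simp only [gword]
      rw [dif_neg (by omega), dif_neg hk]
      have hj : (j : ℕ) < k + 2 := j.isLt
      have := h2 ⟨(j : ℕ) - 1, by omega⟩
      rw [show i + 1 + ((j : ℕ) - 1) = i + (j : ℕ) by omega] at this
      exact this

lemma block_pred_iff (f : Fin k → Fin b) (i : ℕ) :
    (List.ofFn (fun j : Fin (List.ofFn (gword k a₁ a₂ f)).length => d (i + (j : ℕ)))
        = List.ofFn (gword k a₁ a₂ f)) ↔
      (d i = a₁ ∧ (∀ t : Fin k, d (i + 1 + (t : ℕ)) = f t) ∧ d (i + k + 1) = a₂) := by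
  rw [ofFn_eq_iff', ← gword_spec d k a₁ a₂ f i]
  have hlen : (List.ofFn (gword k a₁ a₂ f)).length = k + 2 := List.length_ofFn
  constructor
  · intro h j
    have := h (Fin.cast hlen.symm j)
    rw [List.get_ofFn] at this
    exact this
  · intro h j
    rw [List.get_ofFn]
    exact h (Fin.cast hlen j)

lemma card_decomp (N : ℕ) :
    ((Finset.range N).filter (fun i => d i = a₁ ∧ d (i + k + 1) = a₂)).card
      = ∑ f : Fin k → Fin b, ((Finset.range N).filter
          (fun i => d i = a₁ ∧ (∀ t : Fin k, d (i + 1 + (t : ℕ)) = f t)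
            ∧ d (i + k + 1) = a₂)).card := by
  rw [← Finset.card_biUnion]
  · congr 1
    ext i
    simp only [Finset.mem_biUnion, Finset.mem_filter, Finset.mem_univ, true_and,
      Finset.mem_range]
    constructor
    · rintro ⟨hi, h1, h3⟩
      exact ⟨fun t => d (i + 1 + (t : ℕ)), hi, h1, fun t => rfl, h3⟩
    · rintro ⟨f, hi, h1, _, h3⟩
      exact ⟨hi, h1, h3⟩
  · intro f _ g _ hfg
    apply Finset.disjoint_left.mpr
    intro i hi hi'
    simp only [Finset.mem_filter] at hi hi'
    exact hfg (funext fun t => (hi.2.2.1 t).symm.trans (hi'.2.2.1 t))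

end aux

/-- In a normal sequence, pairs of outcomes separated by a gap of `k` positions
are uniformly distributed: each pair `(a₁, a₂)` occurs with limiting
frequency `1/b²`. -/
theorem normal_gap_pairs_uniform {b : ℕ} (hb : 2 ≤ b) (d : ℕ → Fin b)
    (hd : IsNormal b d) (k : ℕ) (a₁ a₂ : Fin b) :
    Filter.Tendsto
      (fun N : ℕ =>
        (((Finset.range N).filter
          (fun i => d i = a₁ ∧ d (i + k + 1) = a₂)).card : ℝ) / N)
      Filter.atTop (nhds (1 / (b : ℝ) ^ 2)) := by
  have hb0 : (b : ℝ) ≠ 0 := by positivity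
  have key : ∀ f : Fin k → Fin b,
      Filter.Tendsto (fun N : ℕ => (((Finset.range N).filter
          (fun i => d i = a₁ ∧ (∀ t : Fin k, d (i + 1 + (t : ℕ)) = f t)
            ∧ d (i + k + 1) = a₂)).card : ℝ) / N)
        Filter.atTop (nhds (((1 : ℝ) / b) ^ (k + 2))) := by
    intro f
    have hw : (List.ofFn (gword k a₁ a₂ f)) ≠ [] := by
      simp [← List.length_pos_iff, List.length_ofFn]
    have := hd (List.ofFn (gword k a₁ a₂ f)) hw
    have hlen : (List.ofFn (gword k a₁ a₂ f)).length = k + 2 := List.length_ofFn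
    rw [show ((1:ℝ)/b) ^ (k+2) = (1/b) ^ (List.ofFn (gword k a₁ a₂ f)).length by rw [hlen]]
    convert this using 2 with N
    congr 1
    rw [Nat.cast_inj]
    congr 1
    apply Finset.filter_congr
    intro i _
    exact (block_pred_iff d k a₁ a₂ f i).symm
  have hsum := tendsto_finset_sum (Finset.univ : Finset (Fin k → Fin b))
    (fun f _ => key f)
  have heq : (fun N : ℕ => (((Finset.range N).filter
        (fun i => d i = a₁ ∧ d (i + k + 1) = a₂)).card : ℝ) / N)
      = fun N : ℕ => ∑ f : Fin k → Fin b, (((Finset.range N).filter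
          (fun i => d i = a₁ ∧ (∀ t : Fin k, d (i + 1 + (t : ℕ)) = f t)
            ∧ d (i + k + 1) = a₂)).card : ℝ) / N := by
    funext N
    rw [← Finset.sum_div, card_decomp d k a₁ a₂ N]
    push_cast
    ring
  rw [heq]
  convert hsum using 1
  rw [Finset.sum_const, Finset.card_univ, Fintype.card_fun, Fintype.card_fin, Fintype.card_fin]
  congr 1
  field_simp
  rw [nsmul_eq_mul, Nat.cast_pow, ← mul_assoc, ← pow_add, add_comm 2 k, one_div, inv_pow,
    mul_inv_cancel₀ (pow_ne_zero _ hb0)]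
end
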